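/- Suppose |E[dQ(ℓ)/dℓ]| ≤ c₁ e^{−αℓ} for all ℓ > 0, with α > 0, and L ~ Exponential(r) with rate r > 0, independent of Q. Then the bias of the CLMC estimator truncated at level L_max satisfies |E[∫_{L∧L_max}^{L} e^{rℓ} E[dQ(ℓ)/dℓ] dℓ]| ≤ (c₁/α) e^{−α L_max}. -/

import Mathlib

open MeasureTheory ProbabilityTheory Real

lemma clmc_aux_exp_integral {b s : ℝ} (hb : 0 < b) :
    ∫ x in Set.Ioi s, Real.exp (-(b * x)) = Real.exp (-(b * s)) / b := by
  have hint : IntegrableOn (fun x => Real.exp (-(b * x))) (Set.Ioi s) := by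
    simpa [neg_mul] using exp_neg_integrableOn_Ioi s hb
  have hderiv : ∀ x ∈ Set.Ioi s,
      HasDerivAt (fun a => -Real.exp (-(b * a)) / b) (Real.exp (-(b * x))) x := by
    intro x _
    have h := (hasDerivAt_neg_exp_mul_exp (r := b) (x := x)).div_const b
    simpa [mul_comm, mul_div_assoc, mul_div_cancel_left₀ _ hb.ne'] using h
  have hcont : ContinuousWithinAt (fun a => -Real.exp (-(b * a)) / b) (Set.Ici s) s := by
    apply Continuous.continuousWithinAt; fun_prop
  have h1 : Filter.Tendsto (fun a : ℝ => b * a) Filter.atTop Filter.atTop :=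
    Filter.Tendsto.const_mul_atTop hb Filter.tendsto_id
  have h2 : Filter.Tendsto (fun a : ℝ => -(b * a)) Filter.atTop Filter.atBot :=
    Filter.tendsto_neg_atBot_iff.2 h1
  have htend : Filter.Tendsto (fun a => -Real.exp (-(b * a)) / b) Filter.atTop (nhds 0) := by
    have h3 : Filter.Tendsto (fun a : ℝ => Real.exp (-(b * a))) Filter.atTop (nhds 0) :=
      Real.tendsto_exp_atBot.comp h2
    simpa using (h3.neg.div_const b)
  have := integral_Ioi_of_hasDerivAt_of_tendsto hcont hderiv hint htend
  rw [this]; ring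

lemma clmc_expMeasure_Ici {r : ℝ} (hr : 0 < r) {ℓ : ℝ} (hℓ : 0 ≤ ℓ) :
    expMeasure r (Set.Ici ℓ) = ENNReal.ofReal (Real.exp (-(r * ℓ))) := by
  have happ : expMeasure r (Set.Ici ℓ) = ∫⁻ x in Set.Ici ℓ, exponentialPDF r x := by
    rw [expMeasure, gammaMeasure, withDensity_apply _ measurableSet_Ici]
    rfl
  rw [happ]
  have hpdf : ∀ x ∈ Set.Ici ℓ, exponentialPDF r x
      = ENNReal.ofReal (r * Real.exp (-(r * x))) :=
    fun x hx => exponentialPDF_of_nonneg (le_trans hℓ hx)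
  rw [setLIntegral_congr_fun measurableSet_Ici hpdf]
  have h0 : IntegrableOn (fun x => Real.exp (-(r * x))) (Set.Ioi ℓ) := by
    simpa [neg_mul] using exp_neg_integrableOn_Ioi ℓ hr
  have hint : IntegrableOn (fun x => r * Real.exp (-(r * x))) (Set.Ici ℓ) := by
    rw [integrableOn_Ici_iff_integrableOn_Ioi]
    exact h0.const_mul r
  rw [← ofReal_integral_eq_lintegral_ofReal hint (ae_of_all _ fun x => by positivity)]
  congr 1
  rw [MeasureTheory.integral_Ici_eq_integral_Ioi, integral_const_mul,
    clmc_aux_exp_integral hr]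
  field_simp

/-- Bias bound for the truncated CLMC estimator: if `|E[dQ(ℓ)/dℓ]| ≤ c₁ e^{−αℓ}` and
`L ~ Exponential(r)` (so `1/P(L ≥ ℓ) = e^{rℓ}`), then
`|E[∫_{L∧L_max}^{L} e^{rℓ} E[dQ(ℓ)/dℓ] dℓ]| ≤ (c₁/α) e^{−α L_max}`. -/
theorem clmc_bias_bound {Ω : Type*} [MeasurableSpace Ω] (μ : Measure Ω)
    [IsProbabilityMeasure μ] (dQ : ℝ → Ω → ℝ)
    (hjm : Measurable (Function.uncurry dQ)) (L : Ω → ℝ) (hLm : Measurable L)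
    (r α c₁ Lmax : ℝ) (hr : 0 < r) (hα : 0 < α) (hc₁ : 0 < c₁) (hLmax : 0 ≤ Lmax)
    (hlaw : Measure.map L μ = expMeasure r)
    (hbias : ∀ ℓ > (0 : ℝ), |∫ ω, dQ ℓ ω ∂μ| ≤ c₁ * Real.exp (-(α * ℓ))) :
    |∫ ω, (∫ ℓ in (min (L ω) Lmax)..(L ω), Real.exp (r * ℓ) * ∫ ω', dQ ℓ ω' ∂μ) ∂μ|
      ≤ (c₁ / α) * Real.exp (-(α * Lmax)) := by
  -- notation
  set h : ℝ → ℝ := fun ℓ => ∫ ω', dQ ℓ ω' ∂μ with hh_def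
  set g : ℝ → ℝ := fun ℓ => Real.exp (r * ℓ) * h ℓ with hg_def
  have hh_meas : StronglyMeasurable h := hjm.stronglyMeasurable.integral_prod_right'
  have hg_meas : Measurable g :=
    (Real.measurable_exp.comp (measurable_id.const_mul r)).mul hh_meas.measurable
  -- the two-variable integrand
  set f : Ω → ℝ → ℝ := fun ω ℓ => if Lmax < ℓ ∧ ℓ ≤ L ω then g ℓ else 0 with hf_def
  -- rewrite the interval integral
  have hrw : ∀ ω, (∫ ℓ in (min (L ω) Lmax)..(L ω), Real.exp (r * ℓ) * ∫ ω', dQ ℓ ω' ∂μ)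
      = ∫ ℓ, f ω ℓ := by
    intro ω
    rw [intervalIntegral.integral_of_le (min_le_left _ _),
      ← MeasureTheory.integral_indicator measurableSet_Ioc]
    congr 1
    funext ℓ
    simp only [Set.indicator_apply, Set.mem_Ioc, min_lt_iff, hf_def, hg_def, hh_def]
    apply if_congr _ rfl rfl
    constructor
    · rintro ⟨h1 | h1, h2⟩
      · exact absurd h2 (not_le.2 h1)
      · exact ⟨h1, h2⟩
    · rintro ⟨h1, h2⟩; exact ⟨Or.inr h1, h2⟩
  -- measurability of the uncurried function
  have hsetP : MeasurableSet {q : Ω × ℝ | Lmax < q.2 ∧ q.2 ≤ L q.1} := by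
    have h1 : MeasurableSet {q : Ω × ℝ | Lmax < q.2} :=
      measurable_snd measurableSet_Ioi
    have h2 : MeasurableSet {q : Ω × ℝ | q.2 ≤ L q.1} :=
      measurableSet_le measurable_snd (hLm.comp measurable_fst)
    exact h1.inter h2
  have hF_meas : Measurable (Function.uncurry f) := by
    have : Function.uncurry f = fun q : Ω × ℝ =>
        if Lmax < q.2 ∧ q.2 ≤ L q.1 then g q.2 else 0 := rfl
    rw [this]
    exact Measurable.ite hsetP (hg_meas.comp measurable_snd) measurable_const
  -- tail probability
  have htail : ∀ ℓ : ℝ, Lmax < ℓ → (μ {ω | ℓ ≤ L ω}).toReal = Real.exp (-(r * ℓ)) := by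
    intro ℓ hℓ
    have hs : {ω | ℓ ≤ L ω} = L ⁻¹' Set.Ici ℓ := rfl
    rw [hs, ← Measure.map_apply hLm measurableSet_Ici, hlaw,
      clmc_expMeasure_Ici hr (le_trans hLmax hℓ.le)]
    exact ENNReal.toReal_ofReal (Real.exp_pos _).le
  have hsℓ : ∀ ℓ : ℝ, MeasurableSet {ω | ℓ ≤ L ω} := fun ℓ => hLm measurableSet_Ici
  -- sections in ω
  have hsec : ∀ ℓ : ℝ, (fun ω => f ω ℓ) = Set.indicator {ω | ℓ ≤ L ω}
      (fun _ => if Lmax < ℓ then g ℓ else 0) := by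
    intro ℓ
    funext ω
    by_cases h1 : Lmax < ℓ <;> by_cases h2 : ℓ ≤ L ω <;>
      simp [hf_def, Set.indicator_apply, h1, h2]
  have hsec_int : ∀ ℓ : ℝ, Integrable (fun ω => f ω ℓ) μ := by
    intro ℓ
    rw [hsec ℓ]
    exact (integrable_const _).indicator (hsℓ ℓ)
  -- exponential cancellation
  have hx : ∀ ℓ : ℝ, Real.exp (-(r * ℓ)) * Real.exp (r * ℓ) = 1 := by
    intro ℓ; rw [← Real.exp_add]; norm_num
  -- value and norm of the inner ω-integral
  have hval : ∀ ℓ : ℝ, (∫ ω, f ω ℓ ∂μ) = Set.indicator (Set.Ioi Lmax) h ℓ := by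
    intro ℓ
    rw [hsec ℓ, MeasureTheory.integral_indicator_const _ (hsℓ ℓ)]
    by_cases h1 : Lmax < ℓ
    · rw [if_pos h1, Set.indicator_of_mem (Set.mem_Ioi.2 h1), smul_eq_mul, measureReal_def, htail ℓ h1,
        hg_def]
      simp only
      rw [← mul_assoc, hx ℓ, one_mul]
    · rw [if_neg h1, Set.indicator_of_notMem (by simpa using h1), smul_zero]
  have hnorm : ∀ ℓ : ℝ, (∫ ω, ‖f ω ℓ‖ ∂μ) = Set.indicator (Set.Ioi Lmax)
      (fun ℓ => ‖h ℓ‖) ℓ := by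
    intro ℓ
    have heq : (fun ω => ‖f ω ℓ‖) = Set.indicator {ω | ℓ ≤ L ω}
        (fun _ => ‖if Lmax < ℓ then g ℓ else 0‖) := by
      funext ω
      by_cases h1 : Lmax < ℓ <;> by_cases h2 : ℓ ≤ L ω <;>
        simp [hf_def, Set.indicator_apply, h1, h2]
    rw [heq, MeasureTheory.integral_indicator_const _ (hsℓ ℓ)]
    by_cases h1 : Lmax < ℓ
    · rw [if_pos h1, Set.indicator_of_mem (Set.mem_Ioi.2 h1), smul_eq_mul, measureReal_def, htail ℓ h1,
        hg_def]
      simp only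
      rw [norm_mul, Real.norm_eq_abs (Real.exp _), Real.abs_exp, ← mul_assoc, hx ℓ, one_mul]
    · rw [if_neg h1, Set.indicator_of_notMem (by simpa using h1), norm_zero, smul_zero]
  -- the dominating function
  have h0B : IntegrableOn (fun x => Real.exp (-(α * x))) (Set.Ioi Lmax) := by
    simpa [neg_mul] using exp_neg_integrableOn_Ioi Lmax hα
  have hBint : Integrable (Set.indicator (Set.Ioi Lmax)
      (fun ℓ => c₁ * Real.exp (-(α * ℓ)))) := by
    rw [MeasureTheory.integrable_indicator_iff measurableSet_Ioi]
    exact h0B.const_mul c₁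
  have hbound : ∀ ℓ ∈ Set.Ioi Lmax, ‖h ℓ‖ ≤ c₁ * Real.exp (-(α * ℓ)) := by
    intro ℓ hℓ
    simpa [Real.norm_eq_abs, hh_def] using hbias ℓ (lt_of_le_of_lt hLmax hℓ)
  -- integrability on the product
  have hFint : Integrable (Function.uncurry f) (μ.prod volume) := by
    rw [MeasureTheory.integrable_prod_iff' hF_meas.aestronglyMeasurable]
    constructor
    · exact ae_of_all _ hsec_int
    · apply Integrable.mono' hBint
      · apply aestronglyMeasurable_iff_aemeasurable.2
        apply AEMeasurable.congr (f := Set.indicator (Set.Ioi Lmax) (fun ℓ => ‖h ℓ‖))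
        · exact (hh_meas.measurable.norm.indicator measurableSet_Ioi).aemeasurable
        · exact ae_of_all _ fun ℓ => (hnorm ℓ).symm
      · apply ae_of_all
        intro ℓ
        simp only [Function.uncurry_apply_pair]
        rw [Real.norm_eq_abs, hnorm ℓ]
        by_cases h1 : Lmax < ℓ
        · rw [Set.indicator_of_mem (Set.mem_Ioi.2 h1), Set.indicator_of_mem (Set.mem_Ioi.2 h1),
            abs_of_nonneg (norm_nonneg _)]
          exact hbound ℓ h1
        · rw [Set.indicator_of_notMem (by simpa using h1),
            Set.indicator_of_notMem (by simpa using h1)]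
          simp
  -- Fubini
  have hswap : (∫ ω, ∫ ℓ, f ω ℓ ∂volume ∂μ) = ∫ ℓ, ∫ ω, f ω ℓ ∂μ ∂volume :=
    MeasureTheory.integral_integral_swap hFint
  calc |∫ ω, (∫ ℓ in (min (L ω) Lmax)..(L ω), Real.exp (r * ℓ) * ∫ ω', dQ ℓ ω' ∂μ) ∂μ|
      = |∫ ℓ in Set.Ioi Lmax, h ℓ| := by
        rw [show (∫ ω, (∫ ℓ in (min (L ω) Lmax)..(L ω),
            Real.exp (r * ℓ) * ∫ ω', dQ ℓ ω' ∂μ) ∂μ) = ∫ ω, ∫ ℓ, f ω ℓ ∂volume ∂μ from by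
          congr 1; funext ω; exact hrw ω]
        rw [hswap]
        congr 1
        rw [← MeasureTheory.integral_indicator measurableSet_Ioi]
        congr 1
        funext ℓ
        exact hval ℓ
    _ ≤ ∫ ℓ in Set.Ioi Lmax, c₁ * Real.exp (-(α * ℓ)) := by
        rw [← Real.norm_eq_abs]
        apply MeasureTheory.norm_integral_le_of_norm_le
        · exact (MeasureTheory.integrable_indicator_iff measurableSet_Ioi).mp hBint
        · rw [ae_restrict_iff' measurableSet_Ioi]
          exact ae_of_all _ hbound
    _ = (c₁ / α) * Real.exp (-(α * Lmax)) := by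
        rw [integral_const_mul, clmc_aux_exp_integral hα]
        ring
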